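/- Let a > 0 be a real number and let (m_n)_{n≥1} be a sequence of positive integers such that m_n/n → a as n → ∞. Then ((2n)!^2 · (2m_n)! · (m_n+2n−1)!)/(2 · n!^2 · m_n! · (2m_n+4n−2)!) · ((m_n)_{n−1} · (m_n+n+1)_{n−1})/((n−1)!)^2 → 2·√(a(a+2)) / (π·(a+1)^2) as n → ∞. -/

import Mathlib

open Filter Real Topology

/-- Shifted factorial `(x)_k = x(x+1)···(x+k-1)` for a real `x`. -/
def shiftedR (x : ℝ) (k : ℕ) : ℝ := ∏ t ∈ Finset.range k, (x + t)

lemma shiftedR_fact (c k : ℕ) :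
    shiftedR ((c:ℝ)+1) k * (Nat.factorial c : ℝ) = (Nat.factorial (k + c) : ℝ) := by
  induction k with
  | zero => simp [shiftedR]
  | succ k ih =>
      rw [shiftedR, Finset.prod_range_succ, ← shiftedR]
      have h : (k+1) + c = (k + c) + 1 := by omega
      rw [h, Nat.factorial_succ]
      push_cast
      nlinarith [ih]

noncomputable def bseq (k : ℕ) : ℝ := (Nat.centralBinom k : ℝ) * Real.sqrt k / 4^k

lemma centralBinom_cast (k : ℕ) :
    (Nat.centralBinom k : ℝ) = (Nat.factorial (2*k) : ℝ) / ((Nat.factorial k : ℝ))^2 := by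
  have h := Nat.choose_mul_factorial_mul_factorial (show k ≤ 2*k by omega)
  have h2 : 2*k - k = k := by omega
  rw [h2] at h
  rw [Nat.centralBinom]
  field_simp
  rw [← h]
  push_cast
  ring

lemma bseq_eq (k : ℕ) (hk : k ≠ 0) :
    bseq k = Stirling.stirlingSeq (2*k) / (Stirling.stirlingSeq k)^2 := by
  have hk0 : (0:ℝ) < k := by exact_mod_cast Nat.pos_of_ne_zero hk
  unfold Stirling.stirlingSeq bseq
  rw [centralBinom_cast]
  set u := Real.sqrt (k:ℝ) with hu
  have hu0 : 0 < u := Real.sqrt_pos.mpr hk0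
  have huk : (k:ℝ) = u^2 := (Real.sq_sqrt hk0.le).symm
  set E := Real.exp 1 with hE
  have hE0 : 0 < E := Real.exp_pos 1
  have h1 : Real.sqrt (2*((2*k:ℕ):ℝ)) = 2 * u := by
    push_cast
    rw [show (2:ℝ)*(2*(k:ℝ)) = 2^2*(k:ℝ) by ring,
      Real.sqrt_mul (by positivity), Real.sqrt_sq (by norm_num), hu]
  have h3 : (((2*k:ℕ):ℝ)/E)^(2*k) = 4^k * (((k:ℝ)/E)^k)^2 := by
    push_cast
    rw [show (2*(k:ℝ))/E = 2 * ((k:ℝ)/E) by ring, mul_pow,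
      show ((2:ℝ))^(2*k) = 4^k by rw [pow_mul]; norm_num, mul_comm 2 k, pow_mul]
  rw [h1, h3]
  have hf1 : (0:ℝ) < (Nat.factorial k : ℝ) := by exact_mod_cast Nat.factorial_pos k
  have hs : (0:ℝ) < Real.sqrt (2*(k:ℝ)) := Real.sqrt_pos.mpr (by positivity)
  have hkk : (0:ℝ) < (k:ℝ)^k := by positivity
  rw [div_pow ((k:ℝ)) E k]
  field_simp
  ring_nf
  rw [Real.sq_sqrt (by positivity : (0:ℝ) ≤ (k:ℝ)*2)]
  linarith [huk]

lemma bseq_tendsto : Tendsto bseq atTop (𝓝 ((Real.sqrt π)⁻¹)) := by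
  have hπ : (0:ℝ) < Real.sqrt π := Real.sqrt_pos.mpr Real.pi_pos
  have h2 : Tendsto (fun k : ℕ => 2*k) atTop atTop :=
    tendsto_atTop_mono (fun n => by simpa using (by omega : n ≤ 2*n)) tendsto_id
  have hs := Stirling.tendsto_stirlingSeq_sqrt_pi
  have h := ((hs.comp h2).div (hs.pow 2) (by positivity)
    : Tendsto (fun k : ℕ => Stirling.stirlingSeq (2*k) / (Stirling.stirlingSeq k)^2)
      atTop (𝓝 (Real.sqrt π / (Real.sqrt π)^2)))
  have hval : Real.sqrt π / (Real.sqrt π)^2 = (Real.sqrt π)⁻¹ := by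
    rw [sq]; field_simp
  rw [hval] at h
  apply h.congr'
  filter_upwards [eventually_ge_atTop 1] with k hk
  exact (bseq_eq k (by omega)).symm

lemma keyR (p q : ℕ) :
    bseq (p+1) ^ 2 * bseq (q+1) / bseq (q+2*p+2) *
      (2 * Real.sqrt (((q:ℝ)+1) * ((q:ℝ)+2*(p:ℝ)+2)) * ((p:ℝ)+1) /
        ((((q:ℝ)+(p:ℝ)+2)) * ((q:ℝ)+(p:ℝ)+1)))
    = (Nat.centralBinom (p+1) : ℝ)^2 * (Nat.centralBinom (q+1) : ℝ) /
        (Nat.centralBinom (q+2*p+2) : ℝ) *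
      (2 * ((q:ℝ)+1) * ((p:ℝ)+1)^2) / (4 * ((q:ℝ)+(p:ℝ)+2) * ((q:ℝ)+(p:ℝ)+1)) := by
  unfold bseq
  have hq1 : (0:ℝ) ≤ (q:ℝ)+1 := by positivity
  have hq2 : (0:ℝ) ≤ (q:ℝ)+2*(p:ℝ)+2 := by positivity
  have r2 : Real.sqrt (((q:ℝ)+1) * ((q:ℝ)+2*(p:ℝ)+2))
      = Real.sqrt ((q:ℝ)+1) * Real.sqrt ((q:ℝ)+2*(p:ℝ)+2) := Real.sqrt_mul hq1 _
  have c1 : (((q+1:ℕ)):ℝ) = (q:ℝ)+1 := by push_cast; ring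
  have c2 : (((q+2*p+2:ℕ)):ℝ) = (q:ℝ)+2*(p:ℝ)+2 := by push_cast; ring
  rw [r2, c1, c2]
  set u1 := Real.sqrt ((q:ℝ)+1) with hu1
  set u2 := Real.sqrt ((q:ℝ)+2*(p:ℝ)+2) with hu2
  have hu10 : 0 < u1 := Real.sqrt_pos.mpr (by positivity)
  have hu20 : 0 < u2 := Real.sqrt_pos.mpr (by positivity)
  have hu1s : u1^2 = (q:ℝ)+1 := Real.sq_sqrt hq1
  have r1 : Real.sqrt (((p+1:ℕ)):ℝ) ^ 2 = (p:ℝ)+1 := by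
    rw [Real.sq_sqrt (by positivity)]; push_cast; ring
  have hcb : (0:ℝ) < (Nat.centralBinom (q+2*p+2) : ℝ) := by
    exact_mod_cast Nat.centralBinom_pos _
  have g1 : ((q:ℝ)+(p:ℝ)+2) ≠ 0 := by positivity
  have g2 : ((q:ℝ)+(p:ℝ)+1) ≠ 0 := by positivity
  have h4 : ∀ k : ℕ, ((4:ℝ))^k ≠ 0 := fun k => by positivity
  have r1' : (0:ℝ) < Real.sqrt (((p+1:ℕ)):ℝ) := Real.sqrt_pos.mpr (by positivity)
  have hcb1 : (0:ℝ) < (Nat.centralBinom (p+1) : ℝ) := by exact_mod_cast Nat.centralBinom_pos _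
  have hcb2 : (0:ℝ) < (Nat.centralBinom (q+1) : ℝ) := by exact_mod_cast Nat.centralBinom_pos _
  rw [← r1, ← hu1s]
  field_simp
  ring_nf

lemma keyL (p q : ℕ) :
    ((Nat.factorial (2*p+2) : ℝ)^2 * (Nat.factorial (2*q+2) : ℝ) *
        (Nat.factorial (q+2*p+2) : ℝ)) /
      (2 * (Nat.factorial (p+1) : ℝ)^2 * (Nat.factorial (q+1) : ℝ) *
        (Nat.factorial (2*q+4*p+4) : ℝ)) *
    ((shiftedR ((q:ℝ)+1) p * shiftedR ((q:ℝ)+(p:ℝ)+3) p) / (Nat.factorial p : ℝ)^2)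
    = (Nat.centralBinom (p+1) : ℝ)^2 * (Nat.centralBinom (q+1) : ℝ) /
        (Nat.centralBinom (q+2*p+2) : ℝ) *
      (2 * ((q:ℝ)+1) * ((p:ℝ)+1)^2) / (4 * ((q:ℝ)+(p:ℝ)+2) * ((q:ℝ)+(p:ℝ)+1)) := by
  have s1 : shiftedR ((q:ℝ)+1) p = (Nat.factorial (p+q) : ℝ) / (Nat.factorial q : ℝ) := by
    rw [eq_div_iff (by exact_mod_cast (Nat.factorial_pos q).ne')]
    exact shiftedR_fact q p
  have s2 : shiftedR ((q:ℝ)+(p:ℝ)+3) p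
      = (Nat.factorial (q+2*p+2) : ℝ) / (Nat.factorial (q+p+2) : ℝ) := by
    rw [eq_div_iff (by exact_mod_cast (Nat.factorial_pos (q+p+2)).ne')]
    have h := shiftedR_fact (q+p+2) p
    rw [show p+(q+p+2) = q+2*p+2 from by omega] at h
    have hc : ((q+p+2:ℕ):ℝ)+1 = (q:ℝ)+(p:ℝ)+3 := by push_cast; ring
    rw [hc] at h
    exact h
  rw [s1, s2, centralBinom_cast, centralBinom_cast, centralBinom_cast,
    show 2*(p+1) = 2*p+2 from by ring, show 2*(q+1) = 2*q+2 from by ring,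
    show 2*(q+2*p+2) = 2*q+4*p+4 from by ring]
  have e1 : (Nat.factorial (p+1) : ℝ) = ((p:ℝ)+1) * (Nat.factorial p : ℝ) := by
    rw [Nat.factorial_succ]; push_cast; ring
  have e2 : (Nat.factorial (q+1) : ℝ) = ((q:ℝ)+1) * (Nat.factorial q : ℝ) := by
    rw [Nat.factorial_succ]; push_cast; ring
  have e3 : (Nat.factorial (q+p+2) : ℝ)
      = ((q:ℝ)+(p:ℝ)+2) * ((q:ℝ)+(p:ℝ)+1) * (Nat.factorial (p+q) : ℝ) := by
    rw [show q+p+2 = (q+p+1)+1 from by ring, Nat.factorial_succ,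
      show q+p+1 = (p+q)+1 from by omega, Nat.factorial_succ]
    push_cast; ring
  rw [e1, e2, e3]
  have f0 : (0:ℝ) < (Nat.factorial p : ℝ) := by exact_mod_cast Nat.factorial_pos p
  have f1 : (0:ℝ) < (Nat.factorial q : ℝ) := by exact_mod_cast Nat.factorial_pos q
  have f2 : (0:ℝ) < (Nat.factorial (p+q) : ℝ) := by exact_mod_cast Nat.factorial_pos (p+q)
  have f3 : (0:ℝ) < (Nat.factorial (2*q+4*p+4) : ℝ) := by
    exact_mod_cast Nat.factorial_pos (2*q+4*p+4)
  have f4 : (0:ℝ) < (Nat.factorial (q+2*p+2) : ℝ) := by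
    exact_mod_cast Nat.factorial_pos (q+2*p+2)
  have g1 : ((q:ℝ)+(p:ℝ)+2) ≠ 0 := by positivity
  have g2 : ((q:ℝ)+(p:ℝ)+1) ≠ 0 := by positivity
  have g3 : ((p:ℝ)+1) ≠ 0 := by positivity
  have g4 : ((q:ℝ)+1) ≠ 0 := by positivity
  field_simp
  ring

lemma keyE (p q : ℕ) :
    ((Nat.factorial (2*(p+1)) : ℝ)^2 * (Nat.factorial (2*(q+1)) : ℝ) *
        (Nat.factorial ((q+1) + 2*(p+1) - 1) : ℝ)) /
      (2 * (Nat.factorial (p+1) : ℝ)^2 * (Nat.factorial (q+1) : ℝ) *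
        (Nat.factorial (2*(q+1) + 4*(p+1) - 2) : ℝ)) *
    ((shiftedR (((q+1:ℕ)):ℝ) ((p+1)-1) *
        shiftedR (((q+1:ℕ):ℝ) + ((p+1:ℕ):ℝ) + 1) ((p+1)-1)) /
      (Nat.factorial ((p+1)-1) : ℝ)^2)
    = bseq (p+1) ^ 2 * bseq (q+1) / bseq ((q+1) + 2*(p+1) - 1) *
      (2 * Real.sqrt ((((q+1:ℕ)):ℝ) * ((((q+1) + 2*(p+1) - 1 : ℕ)):ℝ)) * (((p+1:ℕ)):ℝ) /
        (((((q+1)+(p+1) : ℕ)):ℝ) * ((((q+1)+(p+1)-1 : ℕ)):ℝ))) := by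
  rw [show (q+1) + 2*(p+1) - 1 = q+2*p+2 from by omega,
    show 2*(q+1) + 4*(p+1) - 2 = 2*q+4*p+4 from by omega,
    show (p+1)-1 = p from by omega,
    show (q+1)+(p+1)-1 = q+p+1 from by omega,
    show (q+1)+(p+1) = q+p+2 from by omega,
    show 2*(p+1) = 2*p+2 from by ring, show 2*(q+1) = 2*q+2 from by ring]
  rw [show (((q+1:ℕ)):ℝ) = (q:ℝ)+1 from by push_cast; ring,
    show (((q+2*p+2:ℕ)):ℝ) = (q:ℝ)+2*(p:ℝ)+2 from by push_cast; ring,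
    show (((p+1:ℕ)):ℝ) = (p:ℝ)+1 from by push_cast; ring,
    show (((q+p+2:ℕ)):ℝ) = (q:ℝ)+(p:ℝ)+2 from by push_cast; ring,
    show (((q+p+1:ℕ)):ℝ) = (q:ℝ)+(p:ℝ)+1 from by push_cast; ring,
    show ((q:ℝ)+1) + ((p:ℝ)+1) + 1 = (q:ℝ)+(p:ℝ)+3 from by ring]
  exact (keyL p q).trans (keyR p q).symm

theorem prefactor_limit (a : ℝ) (ha : 0 < a) (m : ℕ → ℕ) (hm1 : ∀ n, 1 ≤ m n)
    (hm : Filter.Tendsto (fun n : ℕ => (m n : ℝ) / (n : ℝ)) Filter.atTop (nhds a)) :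
    Filter.Tendsto
      (fun n : ℕ =>
        ((Nat.factorial (2*n) : ℝ)^2 * (Nat.factorial (2*(m n)) : ℝ) *
            (Nat.factorial (m n + 2*n - 1) : ℝ)) /
          (2 * (Nat.factorial n : ℝ)^2 * (Nat.factorial (m n) : ℝ) *
            (Nat.factorial (2*(m n) + 4*n - 2) : ℝ)) *
        ((shiftedR ((m n : ℝ)) (n-1) * shiftedR ((m n : ℝ) + (n : ℝ) + 1) (n-1)) /
          (Nat.factorial (n-1) : ℝ)^2))
      Filter.atTop
      (nhds (2 * Real.sqrt (a*(a+2)) / (Real.pi * (a+1)^2))) := by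
  have hπ : (0:ℝ) < Real.sqrt π := Real.sqrt_pos.mpr Real.pi_pos
  -- m n → ∞
  have hmR : Tendsto (fun n : ℕ => (m n : ℝ)) atTop atTop := by
    have h1 : Tendsto (fun n : ℕ => ((m n : ℝ)/n) * n) atTop atTop :=
      Tendsto.pos_mul_atTop ha hm tendsto_natCast_atTop_atTop
    apply h1.congr'
    filter_upwards [eventually_ge_atTop 1] with n hn
    have hnn : (n:ℝ) ≠ 0 := Nat.cast_ne_zero.mpr (by omega)
    field_simp
  have hmN : Tendsto m atTop atTop := tendsto_natCast_atTop_iff.mp hmR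
  have hm'N : Tendsto (fun n => m n + 2*n - 1) atTop atTop :=
    tendsto_atTop_mono
      (fun n => by simpa using (show n ≤ m n + 2*n - 1 by have := hm1 n; omega)) tendsto_id
  have hone : Tendsto (fun n : ℕ => 1/(n:ℝ)) atTop (𝓝 0) := tendsto_one_div_atTop_nhds_zero_nat
  -- component limits
  have hy : Tendsto (fun n : ℕ => ((m n + 2*n - 1 : ℕ):ℝ)/n) atTop (𝓝 (a+2)) := by
    have base : Tendsto (fun n : ℕ => ((m n:ℝ)/n + 2) - 1/n) atTop (𝓝 ((a+2)-0)) :=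
      (hm.add tendsto_const_nhds).sub hone
    rw [sub_zero] at base
    apply base.congr'
    filter_upwards [eventually_ge_atTop 1] with n hn
    have hc : ((m n + 2*n - 1 : ℕ):ℝ) = (m n:ℝ) + 2*n - 1 := by
      rw [Nat.cast_sub (by have := hm1 n; omega)]; push_cast; ring
    have hnn : (n:ℝ) ≠ 0 := Nat.cast_ne_zero.mpr (by omega)
    rw [hc]
    field_simp
  have hz : Tendsto (fun n : ℕ => ((m n + n : ℕ):ℝ)/n) atTop (𝓝 (a+1)) := by
    have base : Tendsto (fun n : ℕ => (m n:ℝ)/n + (n:ℝ)/n) atTop (𝓝 (a+1)) := by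
      apply (hm.add tendsto_const_nhds (b := 1)).congr'
      filter_upwards [eventually_ge_atTop 1] with n hn
      have hnn : (n:ℝ) ≠ 0 := Nat.cast_ne_zero.mpr (by omega)
      rw [div_self hnn]
    apply base.congr'
    filter_upwards [eventually_ge_atTop 1] with n hn
    push_cast
    rw [add_div]
  have hw : Tendsto (fun n : ℕ => ((m n + n - 1 : ℕ):ℝ)/n) atTop (𝓝 (a+1)) := by
    have base : Tendsto (fun n : ℕ => ((m n:ℝ)/n + 1) - 1/n) atTop (𝓝 ((a+1)-0)) :=
      (hm.add tendsto_const_nhds).sub hone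
    rw [sub_zero] at base
    apply base.congr'
    filter_upwards [eventually_ge_atTop 1] with n hn
    have hc : ((m n + n - 1 : ℕ):ℝ) = (m n:ℝ) + n - 1 := by
      rw [Nat.cast_sub (by have := hm1 n; omega)]; push_cast; ring
    have hnn : (n:ℝ) ≠ 0 := Nat.cast_ne_zero.mpr (by omega)
    rw [hc]
    field_simp
  -- bseq part
  have hb := bseq_tendsto
  have Hb : Tendsto (fun n : ℕ => bseq n ^2 * bseq (m n) / bseq (m n + 2*n - 1)) atTop
      (𝓝 ((Real.sqrt π)⁻¹^2 * (Real.sqrt π)⁻¹ / (Real.sqrt π)⁻¹)) :=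
    ((hb.pow 2).mul (hb.comp hmN)).div (hb.comp hm'N) (by positivity)
  -- elementary part
  have Hx : Tendsto (fun n : ℕ =>
      2 * Real.sqrt (((m n:ℝ)/n) * (((m n + 2*n - 1:ℕ):ℝ)/n)) /
        ((((m n + n:ℕ):ℝ)/n) * (((m n + n - 1:ℕ):ℝ)/n))) atTop
      (𝓝 (2 * Real.sqrt (a*(a+2)) / ((a+1)*(a+1)))) :=
    (tendsto_const_nhds.mul ((hm.mul hy).sqrt)).div (hz.mul hw) (by positivity)
  have HG2 : Tendsto (fun n : ℕ =>
      2 * Real.sqrt ((m n : ℝ) * ((m n + 2*n - 1 : ℕ):ℝ)) * (n:ℝ) /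
        (((m n + n : ℕ):ℝ) * ((m n + n - 1 : ℕ):ℝ))) atTop
      (𝓝 (2 * Real.sqrt (a*(a+2)) / ((a+1)*(a+1)))) := by
    apply Hx.congr'
    filter_upwards [eventually_ge_atTop 1] with n hn
    have hnn : (0:ℝ) < (n:ℝ) := by exact_mod_cast (by omega : 0 < n)
    have hM : (0:ℝ) ≤ (m n : ℝ) := Nat.cast_nonneg _
    have hZ : (0:ℝ) < ((m n + n : ℕ):ℝ) := by exact_mod_cast (by have := hm1 n; omega : 0 < m n + n)
    have hW : (0:ℝ) < ((m n + n - 1 : ℕ):ℝ) := by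
      exact_mod_cast (by have := hm1 n; omega : 0 < m n + n - 1)
    have hs : Real.sqrt (((m n:ℝ)/n) * (((m n + 2*n - 1:ℕ):ℝ)/n))
        = Real.sqrt ((m n : ℝ) * ((m n + 2*n - 1 : ℕ):ℝ)) / (n:ℝ) := by
      rw [div_mul_div_comm, show (n:ℝ)*(n:ℝ) = (n:ℝ)^2 from (sq ((n:ℝ))).symm,
        Real.sqrt_div (by positivity), Real.sqrt_sq hnn.le]
    have e1 : ((m n + n:ℕ):ℝ)/n * (((m n + n - 1:ℕ):ℝ)/n)
        = (((m n + n:ℕ):ℝ) * ((m n + n - 1:ℕ):ℝ))/(n:ℝ)^2 := by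
      rw [div_mul_div_comm, sq]
    have key2 : ∀ (s P : ℝ), 0 < P → 2*(s/(n:ℝ))/(P/(n:ℝ)^2) = 2*s*(n:ℝ)/P := by
      intro s P hP
      field_simp
    rw [hs, e1, key2 _ _ (by positivity)]
  have final := Hb.mul HG2
  have hval : ((Real.sqrt π)⁻¹^2 * (Real.sqrt π)⁻¹ / (Real.sqrt π)⁻¹) *
      (2 * Real.sqrt (a*(a+2)) / ((a+1)*(a+1)))
      = 2 * Real.sqrt (a*(a+2)) / (Real.pi * (a+1)^2) := by
    have hsq : (Real.sqrt π)^2 = π := Real.sq_sqrt Real.pi_pos.le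
    have ha1 : (0:ℝ) < a+1 := by linarith
    field_simp
    nlinarith [hsq, Real.sqrt_nonneg (a*(a+2)), hπ, ha1]
  rw [hval] at final
  apply final.congr'
  filter_upwards [eventually_ge_atTop 1] with n hn
  obtain ⟨p, rfl⟩ : ∃ p, n = p+1 := ⟨n-1, by omega⟩
  obtain ⟨q, hq⟩ : ∃ q, m (p+1) = q+1 := ⟨m (p+1) - 1, by have := hm1 (p+1); omega⟩
  rw [hq]
  exact (keyE p q).symm
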